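/- For any k ≥ 1 and m ≥ 2, the filtration terms are nested in m: 𝒟_G^{m+1}(k) ⊆ 𝒟_G^m(k), where 𝒟_G^m(k) is the kernel of the Aut(G)-action on 𝔍_G/𝔍_G^{k+1} in the SL(m,ℂ)-representation algebra. -/

import Mathlib

set_option synthInstance.maxHeartbeats 1000000
set_option maxHeartbeats 1000000
open scoped BigOperators

/-- The set of `SL(m,ℂ)`-representations of a group `G`. -/
abbrev SLRep (G : Type*) [Group G] (m : ℕ) := G →* Matrix.SpecialLinearGroup (Fin m) ℂ

/-- The `(i,j)`-component function `a_{ij}(x)`. -/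
noncomputable def afun {G : Type*} [Group G] (m : ℕ) (i j : Fin m) (x : G) :
    SLRep G m → ℂ :=
  fun ρ => ((ρ x : Matrix.SpecialLinearGroup (Fin m) ℂ) : Matrix (Fin m) (Fin m) ℂ) i j

/-- The `SL(m,ℂ)`-representation algebra `𝔯_ℚ^m(G)`: the ℚ-subalgebra of functions on the
representation variety generated by all component functions. -/
noncomputable def RepAlg (G : Type*) [Group G] (m : ℕ) : Subalgebra ℚ (SLRep G m → ℂ) :=
  Algebra.adjoin ℚ {f | ∃ i j x, f = afun m i j x}

theorem afun_mem {G : Type*} [Group G] (m : ℕ) (i j : Fin m) (x : G) :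
    afun m i j x ∈ RepAlg G m :=
  Algebra.subset_adjoin ⟨i, j, x, rfl⟩

/-- `s_{ij}(x) = a_{ij}(x) - δ_{ij}`. -/
noncomputable def sfun {G : Type*} [Group G] (m : ℕ) (i j : Fin m) (x : G) :
    SLRep G m → ℂ :=
  afun m i j x - if i = j then 1 else 0

theorem sfun_mem {G : Type*} [Group G] (m : ℕ) (i j : Fin m) (x : G) :
    sfun m i j x ∈ RepAlg G m := by
  unfold sfun
  refine sub_mem (afun_mem m i j x) ?_
  split_ifs
  · exact one_mem _
  · exact zero_mem _

/-- `a_{ij}(x)` as an element of the representation algebra. -/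
noncomputable def aEl {G : Type*} [Group G] (m : ℕ) (i j : Fin m) (x : G) : RepAlg G m :=
  ⟨afun m i j x, afun_mem m i j x⟩

/-- `s_{ij}(x)` as an element of the representation algebra. -/
noncomputable def sEl {G : Type*} [Group G] (m : ℕ) (i j : Fin m) (x : G) : RepAlg G m :=
  ⟨sfun m i j x, sfun_mem m i j x⟩

/-- The ideal `𝔍_G` generated by all `s_{ij}(x)`, `x ∈ G`. -/
noncomputable def JId (G : Type*) [Group G] (m : ℕ) : Ideal (RepAlg G m) :=
  Ideal.span {f | ∃ i j x, f = sEl m i j x}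

/-- The ideal generated by the `s_{ij}(x_l)` for a generating family `x`. -/
noncomputable def JIdGen {G : Type*} [Group G] (m n : ℕ) (x : Fin n → G) :
    Ideal (RepAlg G m) :=
  Ideal.span {f | ∃ i j l, f = sEl m i j (x l)}

/-- The pullback action of `σ ∈ Aut G` on functions on the representation variety:
`χ^σ(ρ) = χ(ρ ∘ σ)`. -/
noncomputable def pullback {G : Type*} [Group G] (m : ℕ) (σ : MulAut G) :
    (SLRep G m → ℂ) →ₐ[ℚ] (SLRep G m → ℂ) where
  toFun χ := fun ρ => χ (ρ.comp σ.toMonoidHom)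
  map_one' := rfl
  map_mul' _ _ := rfl
  map_zero' := rfl
  map_add' _ _ := rfl
  commutes' _ := rfl

theorem pullback_afun {G : Type*} [Group G] (m : ℕ) (σ : MulAut G) (i j : Fin m) (x : G) :
    pullback m σ (afun m i j x) = afun m i j (σ x) := rfl

theorem pullback_maps {G : Type*} [Group G] (m : ℕ) (σ : MulAut G) :
    (RepAlg G m).map (pullback m σ) ≤ RepAlg G m := by
  rw [RepAlg, AlgHom.map_adjoin]
  apply Algebra.adjoin_mono
  rintro _ ⟨g, ⟨i, j, x, rfl⟩, rfl⟩
  exact ⟨i, j, σ x, rfl⟩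

/-- The action of `Aut G` on the representation algebra. -/
noncomputable def actA {G : Type*} [Group G] (m : ℕ) (σ : MulAut G) :
    RepAlg G m →ₐ[ℚ] RepAlg G m :=
  ((pullback m σ).comp (RepAlg G m).val).codRestrict (RepAlg G m)
    (fun f => pullback_maps m σ ⟨(f : SLRep G m → ℂ), f.2, rfl⟩)

/-- The filtration `𝒟_G^m(k) = Ker(Aut G → Aut(𝔍_G/𝔍_G^{k+1}))`, described elementwise. -/
noncomputable def Dfil (G : Type*) [Group G] (m k : ℕ) : Set (MulAut G) :=
  {σ | ∀ f ∈ JId G m, actA m σ f - f ∈ JId G m ^ (k + 1)}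

section Aux

open Matrix

variable {G : Type*} [Group G]

/-- Block-diagonal embedding `SL(m,ℂ) →* SL(m+1,ℂ)`. -/
noncomputable def embSL (m : ℕ) :
    Matrix.SpecialLinearGroup (Fin m) ℂ →* Matrix.SpecialLinearGroup (Fin (m + 1)) ℂ where
  toFun A := ⟨Matrix.reindex finSumFinEquiv finSumFinEquiv
      (Matrix.fromBlocks (A : Matrix (Fin m) (Fin m) ℂ) 0 0 (1 : Matrix (Fin 1) (Fin 1) ℂ)), by
    rw [Matrix.det_reindex_self, Matrix.det_fromBlocks_zero₂₁]
    simp [A.2]⟩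
  map_one' := Subtype.ext (by
    show Matrix.reindex finSumFinEquiv finSumFinEquiv
      (Matrix.fromBlocks (1 : Matrix (Fin m) (Fin m) ℂ) 0 0 (1 : Matrix (Fin 1) (Fin 1) ℂ)) = 1
    rw [Matrix.fromBlocks_one, Matrix.reindex_apply, Matrix.submatrix_one_equiv])
  map_mul' A B := Subtype.ext (by
    show Matrix.reindex finSumFinEquiv finSumFinEquiv
        (Matrix.fromBlocks ((A * B : Matrix.SpecialLinearGroup (Fin m) ℂ) :
          Matrix (Fin m) (Fin m) ℂ) 0 0 (1 : Matrix (Fin 1) (Fin 1) ℂ))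
        = Matrix.reindex finSumFinEquiv finSumFinEquiv
          (Matrix.fromBlocks (A : Matrix (Fin m) (Fin m) ℂ) 0 0 1)
        * Matrix.reindex finSumFinEquiv finSumFinEquiv
          (Matrix.fromBlocks (B : Matrix (Fin m) (Fin m) ℂ) 0 0 1)
    rw [Matrix.SpecialLinearGroup.coe_mul]
    simp only [Matrix.reindex_apply, Matrix.submatrix_mul_equiv, Matrix.fromBlocks_multiply]
    congr 1 <;> simp)

theorem embSL_castSucc (m : ℕ) (A : Matrix.SpecialLinearGroup (Fin m) ℂ) (i j : Fin m) :
    ((embSL m A : Matrix.SpecialLinearGroup (Fin (m + 1)) ℂ) : Matrix (Fin (m + 1)) (Fin (m + 1)) ℂ)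
      i.castSucc j.castSucc = (A : Matrix (Fin m) (Fin m) ℂ) i j := by
  show (Matrix.reindex finSumFinEquiv finSumFinEquiv _) _ _ = _
  simp [Matrix.reindex_apply, Matrix.submatrix_apply,
    show i.castSucc = Fin.castAdd 1 i from rfl, show j.castSucc = Fin.castAdd 1 j from rfl,
    finSumFinEquiv_symm_apply_castAdd]

theorem embSL_castSucc_last (m : ℕ) (A : Matrix.SpecialLinearGroup (Fin m) ℂ) (i : Fin m) :
    ((embSL m A : Matrix.SpecialLinearGroup (Fin (m + 1)) ℂ) : Matrix (Fin (m + 1)) (Fin (m + 1)) ℂ)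
      i.castSucc (Fin.last m) = 0 := by
  show (Matrix.reindex finSumFinEquiv finSumFinEquiv _) _ _ = _
  simp [Matrix.reindex_apply, Matrix.submatrix_apply,
    show i.castSucc = Fin.castAdd 1 i from rfl,
    finSumFinEquiv_symm_apply_castAdd, finSumFinEquiv_symm_last]

theorem embSL_last_castSucc (m : ℕ) (A : Matrix.SpecialLinearGroup (Fin m) ℂ) (j : Fin m) :
    ((embSL m A : Matrix.SpecialLinearGroup (Fin (m + 1)) ℂ) : Matrix (Fin (m + 1)) (Fin (m + 1)) ℂ)
      (Fin.last m) j.castSucc = 0 := by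
  show (Matrix.reindex finSumFinEquiv finSumFinEquiv _) _ _ = _
  simp [Matrix.reindex_apply, Matrix.submatrix_apply,
    show j.castSucc = Fin.castAdd 1 j from rfl,
    finSumFinEquiv_symm_apply_castAdd, finSumFinEquiv_symm_last]

theorem embSL_last_last (m : ℕ) (A : Matrix.SpecialLinearGroup (Fin m) ℂ) :
    ((embSL m A : Matrix.SpecialLinearGroup (Fin (m + 1)) ℂ) : Matrix (Fin (m + 1)) (Fin (m + 1)) ℂ)
      (Fin.last m) (Fin.last m) = 1 := by
  show (Matrix.reindex finSumFinEquiv finSumFinEquiv _) _ _ = _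
  simp [Matrix.reindex_apply, Matrix.submatrix_apply, finSumFinEquiv_symm_last]

/-- Restriction of functions on `SL(m+1)`-representations to `SL(m)`-representations via
the block-diagonal extension of representations. -/
noncomputable def resMap (G : Type*) [Group G] (m : ℕ) :
    (SLRep G (m + 1) → ℂ) →ₐ[ℚ] (SLRep G m → ℂ) where
  toFun χ := fun ρ => χ ((embSL m).comp ρ)
  map_one' := rfl
  map_mul' _ _ := rfl
  map_zero' := rfl
  map_add' _ _ := rfl
  commutes' _ := rfl

theorem resMap_afun_cast (m : ℕ) (i j : Fin m) (x : G) :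
    resMap G m (afun (m + 1) i.castSucc j.castSucc x) = afun m i j x := by
  funext ρ
  exact embSL_castSucc m (ρ x) i j

theorem resMap_sfun_cast (m : ℕ) (i j : Fin m) (x : G) :
    resMap G m (sfun (m + 1) i.castSucc j.castSucc x) = sfun m i j x := by
  unfold sfun
  rw [map_sub, resMap_afun_cast]
  congr 1
  by_cases h : i = j
  · subst h; rw [if_pos rfl, if_pos rfl, _root_.map_one]
  · rw [if_neg (by simpa [Fin.castSucc_inj] using h), if_neg h, _root_.map_zero]

theorem resMap_sfun_last (m : ℕ) (i j : Fin (m + 1)) (x : G)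
    (h : i = Fin.last m ∨ j = Fin.last m) :
    resMap G m (sfun (m + 1) i j x) = 0 := by
  funext ρ
  show sfun (m + 1) i j x ((embSL m).comp ρ) = 0
  unfold sfun afun
  rcases h with rfl | rfl
  · induction j using Fin.lastCases with
    | last => simp [MonoidHom.comp_apply, embSL_last_last m (ρ x)]
    | cast j =>
      simp [MonoidHom.comp_apply, embSL_last_castSucc m (ρ x) j,
        (Fin.castSucc_lt_last j).ne']
  · induction i using Fin.lastCases with
    | last => simp [MonoidHom.comp_apply, embSL_last_last m (ρ x)]
    | cast i =>
      simp [MonoidHom.comp_apply, embSL_castSucc_last m (ρ x) i,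
        (Fin.castSucc_lt_last i).ne]

theorem afun_eq_sfun_add (m : ℕ) (i j : Fin m) (x : G) :
    afun m i j x = sfun m i j x + (if i = j then 1 else 0) := by
  unfold sfun; ring

theorem resMap_maps (m : ℕ) : (RepAlg G (m + 1)).map (resMap G m) ≤ RepAlg G m := by
  rw [RepAlg, AlgHom.map_adjoin]
  refine Algebra.adjoin_le ?_
  rintro _ ⟨g, ⟨i, j, x, rfl⟩, rfl⟩
  have step : ∀ i j : Fin (m + 1), (i = Fin.last m ∨ j = Fin.last m) →
      resMap G m (afun (m + 1) i j x) ∈ RepAlg G m := by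
    intro i j h
    rw [afun_eq_sfun_add, map_add, resMap_sfun_last m i j x h, zero_add]
    split_ifs
    · rw [_root_.map_one]; exact one_mem _
    · rw [_root_.map_zero]; exact zero_mem _
  induction i using Fin.lastCases with
  | last => exact step _ _ (Or.inl rfl)
  | cast i =>
    induction j using Fin.lastCases with
    | last => exact step _ _ (Or.inr rfl)
    | cast j =>
      rw [resMap_afun_cast]
      exact afun_mem m i j x

/-- The induced map of representation algebras `RepAlg G (m+1) → RepAlg G m`. -/
noncomputable def Psi (G : Type*) [Group G] (m : ℕ) : RepAlg G (m + 1) →ₐ[ℚ] RepAlg G m :=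
  ((resMap G m).comp (RepAlg G (m + 1)).val).codRestrict (RepAlg G m)
    (fun f => resMap_maps m ⟨(f : SLRep G (m + 1) → ℂ), f.2, rfl⟩)

theorem Psi_sEl_cast (m : ℕ) (i j : Fin m) (x : G) :
    Psi G m (sEl (m + 1) i.castSucc j.castSucc x) = sEl m i j x :=
  Subtype.ext (resMap_sfun_cast m i j x)

theorem Psi_comm (m : ℕ) (σ : MulAut G) (f : RepAlg G (m + 1)) :
    Psi G m (actA (m + 1) σ f) = actA m σ (Psi G m f) :=
  rfl

theorem Psi_J (m : ℕ) : (JId G (m + 1)).map (Psi G m) ≤ JId G m := by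
  rw [JId, Ideal.map_span]
  refine Ideal.span_le.mpr ?_
  rintro _ ⟨g, ⟨i, j, x, rfl⟩, rfl⟩
  induction i using Fin.lastCases with
  | last =>
    rw [show Psi G m (sEl (m + 1) (Fin.last m) j x) = 0 from
      Subtype.ext (resMap_sfun_last m _ _ _ (Or.inl rfl))]
    exact zero_mem _
  | cast i =>
    induction j using Fin.lastCases with
    | last =>
      rw [show Psi G m (sEl (m + 1) i.castSucc (Fin.last m) x) = 0 from
        Subtype.ext (resMap_sfun_last m _ _ _ (Or.inr rfl))]
      exact zero_mem _
    | cast j =>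
      rw [Psi_sEl_cast]
      exact Ideal.subset_span ⟨i, j, x, rfl⟩

end Aux

/-- the filtrations are nested in `m`: `𝒟_G^{m+1}(k) ⊆ 𝒟_G^m(k)`. -/
theorem D_nested {G : Type*} [Group G] (m k : ℕ) (hm : 2 ≤ m) (hk : 1 ≤ k) :
    Dfil G (m + 1) k ⊆ Dfil G m k := by
  intro σ hσ
  -- Step 1: the generators of `JId G m` move by elements of `JId G m ^ (k+1)`.
  have hgen : ∀ (i j : Fin m) (x : G),
      actA m σ (sEl m i j x) - sEl m i j x ∈ JId G m ^ (k + 1) := by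
    intro i j x
    have h1 : actA (m + 1) σ (sEl (m + 1) i.castSucc j.castSucc x)
        - sEl (m + 1) i.castSucc j.castSucc x ∈ JId G (m + 1) ^ (k + 1) :=
      hσ _ (Ideal.subset_span ⟨i.castSucc, j.castSucc, x, rfl⟩)
    have h2 := Ideal.mem_map_of_mem (Psi G m) h1
    rw [Ideal.map_pow] at h2
    have h3 : Psi G m (actA (m + 1) σ (sEl (m + 1) i.castSucc j.castSucc x)
        - sEl (m + 1) i.castSucc j.castSucc x)
        = actA m σ (sEl m i j x) - sEl m i j x := by
      rw [map_sub, Psi_comm, Psi_sEl_cast]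
    rw [h3] at h2
    exact Ideal.pow_right_mono (Psi_J m) (k + 1) h2
  -- Step 2: every element of the algebra moves by an element of `JId G m ^ k`.
  have hel : ∀ r : RepAlg G m, actA m σ r - r ∈ JId G m ^ k := by
    intro r
    have hr : r ∈ Algebra.adjoin ℚ
        (((↑) : RepAlg G m → (SLRep G m → ℂ)) ⁻¹' {f | ∃ i j x, f = afun m i j x}) := by
      exact (Algebra.adjoin_adjoin_coe_preimage (R := ℚ)
        (s := {f : SLRep G m → ℂ | ∃ i j x, f = afun m i j x})).ge Algebra.mem_top
    induction hr using Algebra.adjoin_induction with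
    | mem r hr =>
      obtain ⟨i, j, x, hx⟩ := hr
      have hra : r = sEl m i j x + (if i = j then 1 else 0) := by
        apply Subtype.ext
        rw [hx]
        show afun m i j x = (sEl m i j x : SLRep G m → ℂ) + _
        rw [afun_eq_sfun_add m i j x]
        congr 1
        split_ifs <;> rfl
      have hc : actA m σ ((if i = j then 1 else 0 : RepAlg G m))
          = (if i = j then 1 else 0 : RepAlg G m) := by
        split_ifs
        · exact map_one _
        · exact map_zero _
      have : actA m σ r - r = actA m σ (sEl m i j x) - sEl m i j x := by
        rw [hra, map_add, hc]; ring
      rw [this]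
      exact Ideal.pow_le_pow_right (Nat.le_succ k) (hgen i j x)
    | algebraMap r =>
      rw [AlgHom.commutes, sub_self]
      exact zero_mem _
    | add a b ha hb hpa hpb =>
      have : actA m σ (a + b) - (a + b) = (actA m σ a - a) + (actA m σ b - b) := by
        rw [map_add]; ring
      rw [this]
      exact add_mem hpa hpb
    | mul a b ha hb hpa hpb =>
      have : actA m σ (a * b) - a * b
          = actA m σ a * (actA m σ b - b) + (actA m σ a - a) * b := by
        rw [map_mul]; ring
      rw [this]
      exact add_mem (Ideal.mul_mem_left _ _ hpb) (Ideal.mul_mem_right _ _ hpa)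
  -- Step 3: conclude by span induction on `JId G m`.
  intro f hf
  refine Submodule.span_induction ?_ ?_ ?_ ?_ hf
  · rintro g ⟨i, j, x, rfl⟩
    exact hgen i j x
  · rw [map_zero, sub_zero]
    exact zero_mem _
  · intro a b _ _ hpa hpb
    have : actA m σ (a + b) - (a + b) = (actA m σ a - a) + (actA m σ b - b) := by
      rw [map_add]; ring
    rw [this]
    exact add_mem hpa hpb
  · intro r a ha hpa
    have : actA m σ (r • a) - r • a
        = actA m σ r * (actA m σ a - a) + (actA m σ r - r) * a := by
      rw [smul_eq_mul, map_mul]; ring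
    rw [this]
    refine add_mem (Ideal.mul_mem_left _ _ hpa) ?_
    rw [pow_succ]
    exact Ideal.mul_mem_mul (hel r) ha
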